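/- arXiv:2208.11649 — 4 statements merged into one kernel-verified Lean document; each statement's English description precedes it below -/
import Mathlib

section
/- Let N ≥ 3 be an integer and let δ, φ ∈ ℤ/Nℤ. Then the set C_{δ,φ}(N) of invertible matrices of the form [[a+bφ, b],[δb, a]] (a, b ∈ ℤ/Nℤ) is a subgroup of GL(2, ℤ/Nℤ), the matrix γ_φ = [[−1, 0],[φ, 1]] does not belong to C_{δ,φ}(N), and C_{δ,φ}(N) is a subgroup of index 2 in N_{δ,φ}(N), the subgroup generated by C_{δ,φ}(N) and γ_φ. -/
open scoped MatrixGroups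

/-- The matrix `γ_φ = [[−1, 0],[φ, 1]]`, as an element of `GL(2, ℤ/Nℤ)` (it is an
involution, hence its own inverse). -/
def gammaPhi (N : ℕ) (φ : ZMod N) : GL (Fin 2) (ZMod N) :=
  ⟨!![-1, 0; φ, 1], !![-1, 0; φ, 1],
    by ext i j; fin_cases i <;> fin_cases j <;>
      simp [Matrix.mul_apply, Fin.sum_univ_succ],
    by ext i j; fin_cases i <;> fin_cases j <;>
      simp [Matrix.mul_apply, Fin.sum_univ_succ]⟩

/-- Let `N ≥ 3` and `δ, φ ∈ ℤ/Nℤ`. The set `C_{δ,φ}(N)` of invertible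
matrices of the form `[[a+bφ, b],[δb, a]]` is a subgroup of `GL(2, ℤ/Nℤ)`, the matrix
`γ_φ = [[−1, 0],[φ, 1]]` does not belong to it, and `C_{δ,φ}(N)` has index `2` in
`N_{δ,φ}(N) = ⟨C_{δ,φ}(N), γ_φ⟩`. -/
theorem stmt_10 (N : ℕ) (hN : 3 ≤ N) (δ φ : ZMod N) :
    ∃ C : Subgroup (GL (Fin 2) (ZMod N)),
      (C : Set (GL (Fin 2) (ZMod N))) =
        {g : GL (Fin 2) (ZMod N) | ∃ a b : ZMod N,
          (g : Matrix (Fin 2) (Fin 2) (ZMod N)) = !![a + b * φ, b; δ * b, a]} ∧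
      gammaPhi N φ ∉ C ∧
      C.relIndex (C ⊔ Subgroup.closure {gammaPhi N φ}) = 2 := by
  set γ := gammaPhi N φ with hγdef
  have hγval : (↑γ : Matrix (Fin 2) (Fin 2) (ZMod N)) = !![-1, 0; φ, 1] := rfl
  let C : Subgroup (GL (Fin 2) (ZMod N)) :=
  { carrier := {g : GL (Fin 2) (ZMod N) | ∃ a b : ZMod N,
        (g : Matrix (Fin 2) (Fin 2) (ZMod N)) = !![a + b * φ, b; δ * b, a]}
    one_mem' := ⟨1, 0, by ext i j; fin_cases i <;> fin_cases j <;> simp⟩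
    mul_mem' := by
      rintro x y ⟨a, b, hx⟩ ⟨c, d, hy⟩
      refine ⟨a * c + δ * b * d, a * d + b * c + b * d * φ, ?_⟩
      rw [Units.val_mul, hx, hy]
      ext i j
      fin_cases i <;> fin_cases j <;>
        simp [Matrix.mul_apply, Fin.sum_univ_succ] <;> ring
    inv_mem' := by
      rintro x ⟨a, b, hx⟩
      refine ⟨Ring.inverse ((a + b * φ) * a - b * (δ * b)) * (a + b * φ),
        -(Ring.inverse ((a + b * φ) * a - b * (δ * b)) * b), ?_⟩
      have h1 : (↑(x⁻¹) : Matrix (Fin 2) (Fin 2) (ZMod N)) = (↑x)⁻¹ :=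
        Matrix.coe_units_inv x
      rw [h1, hx, Matrix.inv_def, Matrix.adjugate_fin_two_of, Matrix.det_fin_two_of]
      ext i j
      fin_cases i <;> fin_cases j <;>
        simp [Matrix.smul_apply] <;> ring }
  have hγC : γ ∉ C := by
    rintro ⟨a, b, h⟩
    rw [hγval] at h
    have h00 : (-1 : ZMod N) = a + b * φ := by simpa using congrFun (congrFun h 0) 0
    have h01 : (0 : ZMod N) = b := by simpa using congrFun (congrFun h 0) 1
    have h11 : (1 : ZMod N) = a := by simpa using congrFun (congrFun h 1) 1
    have h2 : ((2 : ℕ) : ZMod N) = 0 := by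
      push_cast
      linear_combination h11 - h00 + φ * h01
    have := (ZMod.natCast_eq_zero_iff _ _).mp h2
    have := Nat.le_of_dvd (by norm_num) this
    omega
  have hγγ : γ * γ = 1 := by
    ext i j
    show ((γ : Matrix (Fin 2) (Fin 2) (ZMod N)) * (γ : Matrix (Fin 2) (Fin 2) (ZMod N))) i j = (1 : Matrix (Fin 2) (Fin 2) (ZMod N)) i j
    rw [hγval]
    fin_cases i <;> fin_cases j <;>
      simp [Matrix.mul_apply, Fin.sum_univ_succ]
  have hconj : ∀ g ∈ C, γ * g * γ ∈ C := by
    rintro g ⟨a, b, hg⟩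
    refine ⟨a + b * φ, -b, ?_⟩
    rw [Units.val_mul, Units.val_mul, hγval, hg]
    ext i j
    fin_cases i <;> fin_cases j <;>
      simp [Matrix.mul_apply, Fin.sum_univ_succ] <;> ring
  have hγH : γ ∈ C ⊔ Subgroup.closure {γ} :=
    Subgroup.mem_sup_right (Subgroup.subset_closure rfl)
  have key : ∀ g ∈ C ⊔ Subgroup.closure {γ}, g ∈ C ∨ g * γ ∈ C := by
    intro g hg
    have hH : C ⊔ Subgroup.closure {γ} =
        Subgroup.closure ((C : Set (GL (Fin 2) (ZMod N))) ∪ {γ}) := by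
      rw [Subgroup.closure_union, Subgroup.closure_eq]
    rw [hH] at hg
    induction hg using Subgroup.closure_induction with
    | mem x hx =>
      rcases hx with hx | hx
      · exact Or.inl hx
      · right
        rw [Set.mem_singleton_iff.mp hx, hγγ]
        exact C.one_mem
    | one => exact Or.inl C.one_mem
    | mul x y hx hy ihx ihy =>
      rcases ihx with ihx | ihx <;> rcases ihy with ihy | ihy
      · exact Or.inl (C.mul_mem ihx ihy)
      · right
        have : x * y * γ = x * (y * γ) := by group
        rw [this]; exact C.mul_mem ihx ihy
      · right
        have h2 : γ * y * γ ∈ C := hconj y ihy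
        have : x * y * γ = (x * γ) * (γ * y * γ) := by
          rw [show (x*γ) * (γ*y*γ) = x * (γ*γ) * y * γ by group, hγγ]; group
        rw [this]; exact C.mul_mem ihx h2
      · left
        have h2 : γ * (y * γ) * γ ∈ C := hconj _ ihy
        have : x * y = (x * γ) * (γ * (y * γ) * γ) := by
          rw [show (x*γ) * (γ*(y*γ)*γ) = x * (γ*γ) * y * (γ*γ) by group, hγγ]; group
        rw [this]; exact C.mul_mem ihx h2
    | inv x hx ihx =>
      rcases ihx with ihx | ihx
      · exact Or.inl (C.inv_mem ihx)
      · right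
        have h1 : (x * γ)⁻¹ ∈ C := C.inv_mem ihx
        have h2 : γ * (x * γ)⁻¹ * γ ∈ C := hconj _ h1
        have : x⁻¹ * γ = γ * (x * γ)⁻¹ * γ := by
          rw [mul_inv_rev, show γ * (γ⁻¹ * x⁻¹) * γ = (γ * γ⁻¹) * x⁻¹ * γ by group,
            mul_inv_cancel]; group
        rw [this]; exact h2
  refine ⟨C, rfl, hγC, ?_⟩
  rw [Subgroup.relIndex, Subgroup.index_eq_two_iff]
  refine ⟨⟨γ, hγH⟩, ?_⟩
  rintro ⟨g, hg⟩
  simp only [Subgroup.mem_subgroupOf, MulMemClass.mk_mul_mk]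
  rcases key g hg with h | h
  · right
    refine ⟨h, fun hc => hγC ?_⟩
    have : γ = g⁻¹ * (g * γ) := by group
    rw [this]; exact C.mul_mem (C.inv_mem h) hc
  · left
    refine ⟨h, fun hc => hγC ?_⟩
    have : γ = g⁻¹ * (g * γ) := by group
    rw [this]; exact C.mul_mem (C.inv_mem hc) h
end

section
/- Let C_{−7,0}(2^∞) be the subgroup of GL(2, ℤ₂) consisting of all invertible matrices of the form [[a, b],[−7b, a]] with a, b ∈ ℤ₂, and let N_{−7,0}(2^∞) be the subgroup generated by C_{−7,0}(2^∞) and the matrix [[−1, 0],[0, 1]]. Then −Id is the square of an element of N_{−7,0}(2^∞), and consequently every subgroup of N_{−7,0}(2^∞) of index 2 contains −Id. -/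
open scoped MatrixGroups

/-- The involution `diag(−1, 1) = [[−1,0],[0,1]]` as an element of `GL(2, ℤ₂)`. -/
noncomputable def diagNegOneOne : GL (Fin 2) ℤ_[2] :=
  ⟨!![-1, 0; 0, 1], !![-1, 0; 0, 1],
    by ext i j; fin_cases i <;> fin_cases j <;>
      simp [Matrix.mul_apply, Fin.sum_univ_succ],
    by ext i j; fin_cases i <;> fin_cases j <;>
      simp [Matrix.mul_apply, Fin.sum_univ_succ]⟩

/-- The Cartan subgroup `C_{−7,0}(2^∞)`: all invertible matrices `[[a, b],[−7b, a]]`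
with `a, b ∈ ℤ₂`, as a subset of `GL(2, ℤ₂)`. -/
def cartanNeg7 : Set (GL (Fin 2) ℤ_[2]) :=
  {g | ∃ a b : ℤ_[2], (g : Matrix (Fin 2) (Fin 2) ℤ_[2]) = !![a, b; -7 * b, a]}

/-- `N_{−7,0}(2^∞)`, the subgroup of `GL(2, ℤ₂)` generated by `C_{−7,0}(2^∞)` and
`[[−1,0],[0,1]]`. -/
noncomputable def normalizerNeg7 : Subgroup (GL (Fin 2) ℤ_[2]) :=
  Subgroup.closure (cartanNeg7 ∪ {diagNegOneOne})

/-- `7` is a unit in `ℤ₂`. -/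
lemma norm_seven_eq_one : ‖(7 : ℤ_[2])‖ = 1 := by
  have := PadicInt.norm_int_lt_one_iff_dvd (p := 2) 7
  have h1 : ‖((7:ℤ) : ℤ_[2])‖ ≤ 1 := PadicInt.norm_le_one _
  have h2 : ¬ ((2:ℤ) ∣ 7) := by decide
  have : ¬ ‖((7:ℤ) : ℤ_[2])‖ < 1 := by rw [this]; exact_mod_cast h2
  push_cast at h1 this ⊢
  linarith [lt_or_eq_of_le h1]

/-- By Hensel's lemma, `−1/7` has a square root in `ℤ₂`. -/
lemma exists_sqrt_neg_inv_seven : ∃ b : ℤ_[2], 7 * b ^ 2 = -1 := by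
  have h2 : ‖(2 : ℤ_[2])‖ = 1/2 := by
    simpa using PadicInt.norm_p (p := 2)
  set F : Polynomial ℤ_[2] := Polynomial.C 7 * Polynomial.X ^ 2 + 1 with hF
  have hderiv : F.derivative = Polynomial.C 14 * Polynomial.X := by
    simp [hF, Polynomial.derivative_pow]
    rw [← mul_assoc, ← Polynomial.C_mul]
    norm_num
  have heval : F.eval 1 = 8 := by simp [hF]; norm_num
  have hevald : F.derivative.eval 1 = 14 := by rw [hderiv]; simp
  have hnorm : ‖F.eval 1‖ < ‖F.derivative.eval 1‖ ^ 2 := by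
    rw [heval, hevald]
    have h8 : ‖(8 : ℤ_[2])‖ = 1/8 := by
      have : (8 : ℤ_[2]) = 2 ^ 3 := by norm_num
      rw [this, norm_pow, h2]; norm_num
    have h14 : ‖(14 : ℤ_[2])‖ = 1/2 := by
      have : (14 : ℤ_[2]) = 2 * 7 := by norm_num
      rw [this, norm_mul, h2, norm_seven_eq_one]; norm_num
    rw [h8, h14]; norm_num
  obtain ⟨z, hz, -⟩ := hensels_lemma hnorm
  refine ⟨z, ?_⟩
  have : 7 * z ^ 2 + 1 = 0 := by simpa [hF] using hz
  linear_combination this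

/-- The matrix `[[0, b],[−7b, 0]]`, which is a self-inverse element of `GL(2, ℤ₂)`
when `7b² = −1`. -/
noncomputable def cMat (b : ℤ_[2]) (hb : 7 * b ^ 2 = -1) : GL (Fin 2) ℤ_[2] :=
  ⟨!![0, b; -7 * b, 0], !![0, b; -7 * b, 0],
    by ext i j; fin_cases i <;> fin_cases j <;>
      simp [Matrix.mul_apply, Fin.sum_univ_succ] <;> linear_combination -hb,
    by ext i j; fin_cases i <;> fin_cases j <;>
      simp [Matrix.mul_apply, Fin.sum_univ_succ] <;> linear_combination -hb⟩

/-- `−Id` is the square of an element of `N_{−7,0}(2^∞)`, and consequently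
every subgroup of `N_{−7,0}(2^∞)` of index `2` contains `−Id`. -/
theorem stmt_11 :
    (∃ g ∈ normalizerNeg7, g ^ 2 = (-1 : GL (Fin 2) ℤ_[2])) ∧
    ∀ H : Subgroup (GL (Fin 2) ℤ_[2]), H ≤ normalizerNeg7 →
      H.relIndex normalizerNeg7 = 2 → (-1 : GL (Fin 2) ℤ_[2]) ∈ H := by
  obtain ⟨b, hb⟩ := exists_sqrt_neg_inv_seven
  have hsq : ∃ g ∈ normalizerNeg7, g ^ 2 = (-1 : GL (Fin 2) ℤ_[2]) := by
    refine ⟨diagNegOneOne * cMat b hb, ?_, ?_⟩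
    · exact mul_mem
        (Subgroup.subset_closure (Or.inr rfl))
        (Subgroup.subset_closure (Or.inl ⟨0, b, rfl⟩))
    · ext i j
      show ((diagNegOneOne * cMat b hb) ^ 2 : GL (Fin 2) ℤ_[2]).val i j
        = ((-1 : GL (Fin 2) ℤ_[2])).val i j
      rw [pow_two]
      simp only [Units.val_mul, Units.val_neg, Units.val_one]
      show ((!![(-1:ℤ_[2]), 0; 0, 1] * !![0, b; -7 * b, 0]) *
        (!![(-1:ℤ_[2]), 0; 0, 1] * !![0, b; -7 * b, 0])) i j
          = (-(1 : Matrix (Fin 2) (Fin 2) ℤ_[2])) i j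
      fin_cases i <;> fin_cases j <;>
        simp [Matrix.mul_apply, Fin.sum_univ_succ, Matrix.one_apply] <;>
        linear_combination hb
  refine ⟨hsq, fun H hle hrel => ?_⟩
  obtain ⟨g, hg, hg2⟩ := hsq
  have hmem : (⟨g, hg⟩ : normalizerNeg7) ^ 2 ∈ H.subgroupOf normalizerNeg7 :=
    Subgroup.sq_mem_of_index_two hrel _
  rw [Subgroup.mem_subgroupOf] at hmem
  simpa [hg2] using hmem
end

section
/- Let δ ∈ ℤ₂ be odd (not divisible by 2). Let C_{δ,1}(2^∞) be the subgroup of GL(2, ℤ₂) consisting of all invertible matrices of the form [[a+b, b],[δb, a]] with a, b ∈ ℤ₂, and let N_{δ,1}(2^∞) be the subgroup generated by C_{δ,1}(2^∞) and the matrix [[−1, 0],[1, 1]]. Then −Id is the square of an element of N_{δ,1}(2^∞), and consequently every subgroup of N_{δ,1}(2^∞) of index 2 contains −Id. -/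
open scoped MatrixGroups

/-- The involution `[[−1,0],[1,1]]` as an element of `GL(2, ℤ₂)`. -/
noncomputable def gammaOne : GL (Fin 2) ℤ_[2] :=
  ⟨!![-1, 0; 1, 1], !![-1, 0; 1, 1],
    by ext i j; fin_cases i <;> fin_cases j <;>
      simp [Matrix.mul_apply, Fin.sum_univ_succ],
    by ext i j; fin_cases i <;> fin_cases j <;>
      simp [Matrix.mul_apply, Fin.sum_univ_succ]⟩

/-- The Cartan subgroup `C_{δ,1}(2^∞)`: all invertible matrices `[[a+b, b],[δb, a]]`
with `a, b ∈ ℤ₂`, as a subset of `GL(2, ℤ₂)`. -/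
def cartanDeltaOne (δ : ℤ_[2]) : Set (GL (Fin 2) ℤ_[2]) :=
  {g | ∃ a b : ℤ_[2], (g : Matrix (Fin 2) (Fin 2) ℤ_[2]) = !![a + b, b; δ * b, a]}

/-- `N_{δ,1}(2^∞)`, the subgroup of `GL(2, ℤ₂)` generated by `C_{δ,1}(2^∞)` and
`[[−1,0],[1,1]]`. -/
noncomputable def normalizerDeltaOne (δ : ℤ_[2]) : Subgroup (GL (Fin 2) ℤ_[2]) :=
  Subgroup.closure (cartanDeltaOne δ ∪ {gammaOne})

/-- Divisibility by `2` in `ℤ₂` is detected by the residue map. -/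
lemma dvd2_iff (x : ℤ_[2]) : (2 : ℤ_[2]) ∣ x ↔ PadicInt.toZMod x = 0 := by
  rw [← RingHom.mem_ker, PadicInt.ker_toZMod, PadicInt.maximalIdeal_eq_span_p,
    Ideal.mem_span_singleton]
  norm_num

/-- If `δ` is odd, then `X² + X + 1 = δ` has a root in `ℤ₂` (Hensel). -/
lemma exists_root (δ : ℤ_[2]) (hδ : ¬ (2 : ℤ_[2]) ∣ δ) : ∃ a : ℤ_[2], a ^ 2 + a + 1 = δ := by
  have key : ∀ x : ZMod 2, x ≠ 0 → x = 1 := by decide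
  have h1 : (2 : ℤ_[2]) ∣ (1 - δ) := by
    rw [dvd2_iff] at hδ ⊢
    simp [key _ hδ]
  set F : Polynomial ℤ_[2] := Polynomial.X ^ 2 + Polynomial.X + Polynomial.C (1 - δ) with hF
  have heval : F.eval 0 = 1 - δ := by simp [hF]
  have hderiv : F.derivative.eval 0 = 1 := by
    simp [hF, Polynomial.derivative_pow]
  have hnorm : ‖F.eval 0‖ < ‖F.derivative.eval 0‖ ^ 2 := by
    rw [heval, hderiv]
    have := (PadicInt.norm_lt_one_iff_dvd (1 - δ)).2 (by exact_mod_cast h1)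
    simpa using this
  obtain ⟨z, hz, -⟩ := hensels_lemma hnorm
  refine ⟨z, ?_⟩
  have : z ^ 2 + z + (1 - δ) = 0 := by simpa [hF] using hz
  linear_combination this

/-- The Cartan element `[[a+1,1],[δ,a]]`, where `a² + a + 1 = δ` (so its determinant
is `-1`). -/
noncomputable def cElt (δ a : ℤ_[2]) (ha : a ^ 2 + a + 1 = δ) : GL (Fin 2) ℤ_[2] :=
  ⟨!![a + 1, 1; δ, a], !![-a, 1; δ, -(a+1)],
    by subst ha; ext i j; fin_cases i <;> fin_cases j <;>
      simp [Matrix.mul_apply, Fin.sum_univ_succ] <;> ring,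
    by subst ha; ext i j; fin_cases i <;> fin_cases j <;>
      simp [Matrix.mul_apply, Fin.sum_univ_succ] <;> ring⟩

lemma cElt_sq (δ a : ℤ_[2]) (ha : a ^ 2 + a + 1 = δ) :
    (cElt δ a ha * gammaOne) ^ 2 = (-1 : GL (Fin 2) ℤ_[2]) := by
  subst ha
  ext i j
  fin_cases i <;> fin_cases j <;>
    simp [pow_two, cElt, gammaOne, Matrix.mul_apply, Fin.sum_univ_succ] <;> ring

lemma cElt_mem (δ a : ℤ_[2]) (ha : a ^ 2 + a + 1 = δ) : cElt δ a ha ∈ normalizerDeltaOne δ :=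
  Subgroup.subset_closure (Or.inl ⟨a, 1, by simp [cElt]⟩)

lemma gammaOne_mem (δ : ℤ_[2]) : gammaOne ∈ normalizerDeltaOne δ :=
  Subgroup.subset_closure (Or.inr rfl)

/-- Let `δ ∈ ℤ₂` be odd. Then `−Id` is the square of an element of
`N_{δ,1}(2^∞)`, and consequently every subgroup of `N_{δ,1}(2^∞)` of index `2`
contains `−Id`. -/
theorem stmt_12 (δ : ℤ_[2]) (hδ : ¬ (2 : ℤ_[2]) ∣ δ) :
    (∃ g ∈ normalizerDeltaOne δ, g ^ 2 = (-1 : GL (Fin 2) ℤ_[2])) ∧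
    ∀ H : Subgroup (GL (Fin 2) ℤ_[2]), H ≤ normalizerDeltaOne δ →
      H.relIndex (normalizerDeltaOne δ) = 2 → (-1 : GL (Fin 2) ℤ_[2]) ∈ H := by
  obtain ⟨a, ha⟩ := exists_root δ hδ
  have hgmem : cElt δ a ha * gammaOne ∈ normalizerDeltaOne δ :=
    mul_mem (cElt_mem δ a ha) (gammaOne_mem δ)
  refine ⟨⟨cElt δ a ha * gammaOne, hgmem, cElt_sq δ a ha⟩, ?_⟩
  intro H _ hrel
  have := Subgroup.sq_mem_of_index_two hrel (⟨cElt δ a ha * gammaOne, hgmem⟩ :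
    normalizerDeltaOne δ)
  rw [Subgroup.mem_subgroupOf] at this
  simpa [cElt_sq δ a ha] using this
end

section
/- In GL(2, ℤ/8ℤ), define the subgroups H_{1,3} = ⟨diag(1,−1), 3·Id, [[1,1],[−2,1]]⟩, H_{−1,3} = ⟨diag(−1,1), 3·Id, [[1,1],[−2,1]]⟩, H′_{1,3} = ⟨diag(1,−1), 3·Id, [[−1,−1],[2,−1]]⟩, H′_{−1,3} = ⟨diag(−1,1), 3·Id, [[−1,−1],[2,−1]]⟩, and H_{1,5} = ⟨diag(1,−1), 5·Id, [[1,1],[−2,1]]⟩. Then: (i) H_{1,3} is conjugate to H′_{1,3} and H_{−1,3} is conjugate to H′_{−1,3} in GL(2, ℤ/8ℤ); (ii) neither H_{1,3} nor H_{−1,3} contains −Id; (iii) H_{1,3} is not conjugate to H_{−1,3} in GL(2, ℤ/8ℤ); (iv) the subgroup generated by H_{1,3} and −Id equals the subgroup generated by H_{−1,3} and −Id, and both equal H_{1,5}. -/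
open scoped MatrixGroups

/-- The subgroup of `GL(2, ℤ/8ℤ)` generated by the elements whose underlying matrices lie
in the set `S` of matrices. -/
def glGen8 (S : Set (Matrix (Fin 2) (Fin 2) (ZMod 8))) : Subgroup (GL (Fin 2) (ZMod 8)) :=
  Subgroup.closure {g : GL (Fin 2) (ZMod 8) | (g : Matrix (Fin 2) (Fin 2) (ZMod 8)) ∈ S}

/-- `H_{1,3} = ⟨diag(1,−1), 3·Id, [[1,1],[−2,1]]⟩`. -/
def H13 : Subgroup (GL (Fin 2) (ZMod 8)) :=
  glGen8 {!![1, 0; 0, -1], (3 : Matrix (Fin 2) (Fin 2) (ZMod 8)), !![1, 1; -2, 1]}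

/-- `H_{−1,3} = ⟨diag(−1,1), 3·Id, [[1,1],[−2,1]]⟩`. -/
def Hm13 : Subgroup (GL (Fin 2) (ZMod 8)) :=
  glGen8 {!![-1, 0; 0, 1], (3 : Matrix (Fin 2) (Fin 2) (ZMod 8)), !![1, 1; -2, 1]}

/-- `H′_{1,3} = ⟨diag(1,−1), 3·Id, [[−1,−1],[2,−1]]⟩`. -/
def H13' : Subgroup (GL (Fin 2) (ZMod 8)) :=
  glGen8 {!![1, 0; 0, -1], (3 : Matrix (Fin 2) (Fin 2) (ZMod 8)), !![-1, -1; 2, -1]}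

/-- `H′_{−1,3} = ⟨diag(−1,1), 3·Id, [[−1,−1],[2,−1]]⟩`. -/
def Hm13' : Subgroup (GL (Fin 2) (ZMod 8)) :=
  glGen8 {!![-1, 0; 0, 1], (3 : Matrix (Fin 2) (Fin 2) (ZMod 8)), !![-1, -1; 2, -1]}

/-- `H_{1,5} = ⟨diag(1,−1), 5·Id, [[1,1],[−2,1]]⟩`. -/
def H15 : Subgroup (GL (Fin 2) (ZMod 8)) :=
  glGen8 {!![1, 0; 0, -1], (5 : Matrix (Fin 2) (Fin 2) (ZMod 8)), !![1, 1; -2, 1]}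


set_option maxRecDepth 8000

namespace Stmt13Aux

abbrev M2 := Matrix (Fin 2) (Fin 2) (ZMod 8)
abbrev GL8 := GL (Fin 2) (ZMod 8)
abbrev T4 := ZMod 8 × ZMod 8 × ZMod 8 × ZMod 8

def tmul : T4 → T4 → T4
  | (a,b,c,d), (e,f,g,h) => (a*e+b*g, a*f+b*h, c*e+d*g, c*f+d*h)

def dt : T4 → ZMod 8
  | (a,b,c,d) => a*d - b*c

def ent (m : M2) : T4 := (m 0 0, m 0 1, m 1 0, m 1 1)

def mat : T4 → M2
  | (a,b,c,d) => !![a,b;c,d]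

lemma mat_ent (m : M2) : mat (ent m) = m := (Matrix.eta_fin_two m).symm

lemma ent_mat (x : T4) : ent (mat x) = x := by
  rcases x with ⟨a,b,c,d⟩; simp [ent, mat]

lemma mat_tmul (x y : T4) : mat (tmul x y) = mat x * mat y := by
  rcases x with ⟨a,b,c,d⟩; rcases y with ⟨e,f,g,h⟩
  simp [mat, tmul, Matrix.mul_fin_two]

lemma ent_mul (m n : M2) : ent (m * n) = tmul (ent m) (ent n) := by
  conv_lhs => rw [← mat_ent m, ← mat_ent n, ← mat_tmul, ent_mat]

lemma dt_tmul (x y : T4) : dt (tmul x y) = dt x * dt y := by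
  rcases x with ⟨a,b,c,d⟩; rcases y with ⟨e,f,g,h⟩
  simp only [dt, tmul]; ring

/-- A subgroup of `GL8` given by an explicit list of entry tuples. -/
def listSG (L : List T4) (h1 : ((1:ZMod 8),(0:ZMod 8),(0:ZMod 8),(1:ZMod 8)) ∈ L)
    (hm : ∀ x ∈ L, ∀ y ∈ L, tmul x y ∈ L)
    (hi : ∀ x ∈ L, ∃ y ∈ L, tmul x y = (1,0,0,1)) : Subgroup GL8 where
  carrier := {g : GL8 | ent (g : M2) ∈ L}
  one_mem' := by
    have h : ent ((1 : GL8) : M2) = (1,0,0,1) := by decide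
    show ent ((1 : GL8) : M2) ∈ L
    rw [h]; exact h1
  mul_mem' := by
    intro a b ha hb
    simp only [Set.mem_setOf_eq, Units.val_mul, ent_mul] at *
    exact hm _ ha _ hb
  inv_mem' := by
    intro a ha
    simp only [Set.mem_setOf_eq] at *
    obtain ⟨y, hy, hxy⟩ := hi _ ha
    have h2 : ((a : M2)) * mat y = 1 := by
      have := congrArg mat hxy
      rw [mat_tmul, mat_ent] at this
      rw [this]; decide
    have h3 : ((a⁻¹ : GL8) : M2) = mat y := by
      calc ((a⁻¹ : GL8) : M2) = ↑a⁻¹ * ((a : M2) * mat y) := by rw [h2, mul_one]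
      _ = (↑a⁻¹ * ↑a) * mat y := by rw [mul_assoc]
      _ = mat y := by rw [Units.inv_mul, one_mul]
    rw [h3, ent_mat]; exact hy

def L13t : List T4 := [(1,0,0,1), (1,0,0,7), (1,1,2,7), (1,1,6,1), (1,3,2,1), (1,3,6,7), (1,4,0,1), (1,4,0,7), (1,5,2,7), (1,5,6,1), (1,7,2,1), (1,7,6,7), (3,0,0,3), (3,0,0,5), (3,1,2,5), (3,1,6,3), (3,3,2,3), (3,3,6,5), (3,4,0,3), (3,4,0,5), (3,5,2,5), (3,5,6,3), (3,7,2,3), (3,7,6,5), (5,2,4,3), (5,2,4,5), (5,6,4,3), (5,6,4,5), (7,2,4,1), (7,2,4,7), (7,6,4,1), (7,6,4,7)]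

def Lm13t : List T4 := [(1,0,0,1), (1,1,6,1), (1,2,4,7), (1,3,2,1), (1,4,0,1), (1,5,6,1), (1,6,4,7), (1,7,2,1), (3,0,0,3), (3,1,6,3), (3,2,4,5), (3,3,2,3), (3,4,0,3), (3,5,6,3), (3,6,4,5), (3,7,2,3), (5,0,0,3), (5,1,2,3), (5,2,4,5), (5,3,6,3), (5,4,0,3), (5,5,2,3), (5,6,4,5), (5,7,6,3), (7,0,0,1), (7,1,2,1), (7,2,4,7), (7,3,6,1), (7,4,0,1), (7,5,2,1), (7,6,4,7), (7,7,6,1)]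

theorem th13mul : (L13t.all fun x => L13t.all fun y => decide (tmul x y ∈ L13t)) = true := by
  decide

theorem th13inv : (L13t.all fun x => L13t.any fun y =>
    decide (tmul x y = (1,0,0,1))) = true := by decide

theorem thm13mul : (Lm13t.all fun x => Lm13t.all fun y => decide (tmul x y ∈ Lm13t)) = true := by
  decide

theorem thm13inv : (Lm13t.all fun x => Lm13t.any fun y =>
    decide (tmul x y = (1,0,0,1))) = true := by decide

def K13 : Subgroup GL8 :=
  listSG L13t (by decide) (by simpa using th13mul) (by simpa using th13inv)

def Km13 : Subgroup GL8 :=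
  listSG Lm13t (by decide) (by simpa using thm13mul) (by simpa using thm13inv)

lemma mem_K13 (g : GL8) : g ∈ K13 ↔ ent (g : M2) ∈ L13t := Iff.rfl
lemma mem_Km13 (g : GL8) : g ∈ Km13 ↔ ent (g : M2) ∈ Lm13t := Iff.rfl

-- explicit units
def ud : GL8 := ⟨!![1,0;0,7], !![1,0;0,7], by decide, by decide⟩
def udm : GL8 := ⟨!![7,0;0,1], !![7,0;0,1], by decide, by decide⟩
def uc3 : GL8 := ⟨!![3,0;0,3], !![3,0;0,3], by decide, by decide⟩
def uc5 : GL8 := ⟨!![5,0;0,5], !![5,0;0,5], by decide, by decide⟩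
def uA : GL8 := ⟨!![1,1;6,1], !![3,5;6,3], by decide, by decide⟩
def uAp : GL8 := ⟨!![7,7;2,7], !![5,3;2,5], by decide, by decide⟩
def ug : GL8 := ⟨!![3,1;2,7], !![5,5;2,1], by decide, by decide⟩

def zl : List (ZMod 8) := [0,1,2,3,4,5,6,7]

lemma zl_mem (x : ZMod 8) : x ∈ zl := by revert x; decide

def l1357 : List (ZMod 8) := [1,3,5,7]

lemma unit_mem : ∀ u v : ZMod 8, u * v = 1 → u ∈ l1357 := by decide

set_option maxHeartbeats 4000000 in
theorem big : (zl.all fun a => zl.all fun b => zl.all fun c => zl.all fun d =>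
    !(decide (dt (a,b,c,d) ∈ l1357)
      && (Lm13t.any fun h => decide (tmul (a,b,c,d) (1,0,0,7) = tmul h (a,b,c,d)))
      && (Lm13t.any fun h => decide (tmul (a,b,c,d) (1,1,6,1) = tmul h (a,b,c,d))))) = true := by
  decide

theorem bigP : ∀ x : T4, dt x ∈ l1357 →
    (∃ h ∈ Lm13t, tmul x (1,0,0,7) = tmul h x) →
    (∃ h ∈ Lm13t, tmul x (1,1,6,1) = tmul h x) → False := by
  rintro ⟨a,b,c,d⟩ hdet ⟨h1, hh1, e1⟩ ⟨h2, hh2, e2⟩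
  have hb := big
  simp only [List.all_eq_true] at hb
  have h := hb a (zl_mem a) b (zl_mem b) c (zl_mem c) d (zl_mem d)
  rw [decide_eq_true hdet, List.any_eq_true.mpr ⟨h1, hh1, decide_eq_true e1⟩,
    List.any_eq_true.mpr ⟨h2, hh2, decide_eq_true e2⟩] at h
  simp at h

end Stmt13Aux

namespace Stmt13Aux

lemma set13 : {g : GL8 | (g : M2) ∈ ({!![1, 0; 0, -1], (3 : M2), !![1, 1; -2, 1]} : Set M2)}
    = {ud, uc3, uA} := by
  ext x
  simp only [Set.mem_setOf_eq, Set.mem_insert_iff, Set.mem_singleton_iff, Units.ext_iff,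
    show (!![1, 0; 0, -1] : M2) = ↑ud from by decide,
    show ((3 : M2)) = ↑uc3 from by decide,
    show (!![1, 1; -2, 1] : M2) = ↑uA from by decide]

lemma setm13 : {g : GL8 | (g : M2) ∈ ({!![-1, 0; 0, 1], (3 : M2), !![1, 1; -2, 1]} : Set M2)}
    = {udm, uc3, uA} := by
  ext x
  simp only [Set.mem_setOf_eq, Set.mem_insert_iff, Set.mem_singleton_iff, Units.ext_iff,
    show (!![-1, 0; 0, 1] : M2) = ↑udm from by decide,
    show ((3 : M2)) = ↑uc3 from by decide,
    show (!![1, 1; -2, 1] : M2) = ↑uA from by decide]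

lemma set13' : {g : GL8 | (g : M2) ∈ ({!![1, 0; 0, -1], (3 : M2), !![-1, -1; 2, -1]} : Set M2)}
    = {ud, uc3, uAp} := by
  ext x
  simp only [Set.mem_setOf_eq, Set.mem_insert_iff, Set.mem_singleton_iff, Units.ext_iff,
    show (!![1, 0; 0, -1] : M2) = ↑ud from by decide,
    show ((3 : M2)) = ↑uc3 from by decide,
    show (!![-1, -1; 2, -1] : M2) = ↑uAp from by decide]

lemma setm13' : {g : GL8 | (g : M2) ∈ ({!![-1, 0; 0, 1], (3 : M2), !![-1, -1; 2, -1]} : Set M2)}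
    = {udm, uc3, uAp} := by
  ext x
  simp only [Set.mem_setOf_eq, Set.mem_insert_iff, Set.mem_singleton_iff, Units.ext_iff,
    show (!![-1, 0; 0, 1] : M2) = ↑udm from by decide,
    show ((3 : M2)) = ↑uc3 from by decide,
    show (!![-1, -1; 2, -1] : M2) = ↑uAp from by decide]

lemma set15 : {g : GL8 | (g : M2) ∈ ({!![1, 0; 0, -1], (5 : M2), !![1, 1; -2, 1]} : Set M2)}
    = {ud, uc5, uA} := by
  ext x
  simp only [Set.mem_setOf_eq, Set.mem_insert_iff, Set.mem_singleton_iff, Units.ext_iff,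
    show (!![1, 0; 0, -1] : M2) = ↑ud from by decide,
    show ((5 : M2)) = ↑uc5 from by decide,
    show (!![1, 1; -2, 1] : M2) = ↑uA from by decide]

lemma H13_eq : H13 = Subgroup.closure ({ud, uc3, uA} : Set GL8) := by
  unfold H13 glGen8; rw [set13]
lemma Hm13_eq : Hm13 = Subgroup.closure ({udm, uc3, uA} : Set GL8) := by
  unfold Hm13 glGen8; rw [setm13]
lemma H13'_eq : H13' = Subgroup.closure ({ud, uc3, uAp} : Set GL8) := by
  unfold H13' glGen8; rw [set13']
lemma Hm13'_eq : Hm13' = Subgroup.closure ({udm, uc3, uAp} : Set GL8) := by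
  unfold Hm13' glGen8; rw [setm13']
lemma H15_eq : H15 = Subgroup.closure ({ud, uc5, uA} : Set GL8) := by
  unfold H15 glGen8; rw [set15]

lemma conj_closure (x : GL8) (hx : ug * x * ug⁻¹ = uAp⁻¹ * x * uAp)
    (hx' : x = (ug * uA * ug⁻¹) * (ug * x * ug⁻¹) * (ug * uA * ug⁻¹)⁻¹) :
    (Subgroup.closure ({x, uc3, uA} : Set GL8)).map (MulAut.conj ug).toMonoidHom
      = Subgroup.closure ({x, uc3, uAp} : Set GL8) := by
  rw [MonoidHom.map_closure, Set.image_insert_eq, Set.image_insert_eq, Set.image_singleton]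
  simp only [MulEquiv.coe_toMonoidHom, MulAut.conj_apply]
  have hc3 : ug * uc3 * ug⁻¹ = uc3 := by decide
  have hA : ug * uA * ug⁻¹ = uc3 * uAp⁻¹ * uAp⁻¹ * uAp⁻¹ := by decide
  apply le_antisymm
  · rw [Subgroup.closure_le]
    have m1 : x ∈ Subgroup.closure ({x, uc3, uAp} : Set GL8) := Subgroup.subset_closure (by simp)
    have m2 : uc3 ∈ Subgroup.closure ({x, uc3, uAp} : Set GL8) := Subgroup.subset_closure (by simp)
    have m3 : uAp ∈ Subgroup.closure ({x, uc3, uAp} : Set GL8) := Subgroup.subset_closure (by simp)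
    intro y hy
    simp only [Set.mem_insert_iff, Set.mem_singleton_iff] at hy
    simp only [SetLike.mem_coe]
    rcases hy with rfl | rfl | rfl
    · rw [hx]; exact mul_mem (mul_mem (inv_mem m3) m1) m3
    · rw [hc3]; exact m2
    · rw [hA]; exact mul_mem (mul_mem (mul_mem m2 (inv_mem m3)) (inv_mem m3)) (inv_mem m3)
  · rw [Subgroup.closure_le]
    intro y hy
    simp only [Set.mem_insert_iff, Set.mem_singleton_iff] at hy
    simp only [SetLike.mem_coe]
    set S : Set GL8 := insert (ug * x * ug⁻¹) (insert (ug * uc3 * ug⁻¹) {ug * uA * ug⁻¹})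
      with hS
    have n1 : ug * x * ug⁻¹ ∈ Subgroup.closure S := Subgroup.subset_closure (by rw [hS]; simp)
    have n2 : ug * uc3 * ug⁻¹ ∈ Subgroup.closure S := Subgroup.subset_closure (by rw [hS]; simp)
    have n3 : ug * uA * ug⁻¹ ∈ Subgroup.closure S := Subgroup.subset_closure (by rw [hS]; simp)
    rcases hy with rfl | rfl | rfl
    · rw [hx']; exact mul_mem (mul_mem n3 n1) (inv_mem n3)
    · rw [← hc3]; exact n2
    · rw [show uAp = (ug * uc3 * ug⁻¹) * (ug * uA * ug⁻¹)⁻¹ * (ug * uA * ug⁻¹)⁻¹ *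
        (ug * uA * ug⁻¹)⁻¹ from by decide]
      exact mul_mem (mul_mem (mul_mem n2 (inv_mem n3)) (inv_mem n3)) (inv_mem n3)

lemma sup_eq (x : GL8) :
    Subgroup.closure ({x, uc3, uA} : Set GL8) ⊔ Subgroup.closure {(-1 : GL8)}
      = Subgroup.closure (insert (-1 : GL8) {x, uc3, uA}) := by
  rw [← Subgroup.closure_union, Set.union_singleton]

lemma eqm : Subgroup.closure (insert (-1 : GL8) {ud, uc3, uA})
    = Subgroup.closure (insert (-1 : GL8) {udm, uc3, uA}) := by
  apply le_antisymm
  · rw [Subgroup.closure_le]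
    have m0 : (-1 : GL8) ∈ Subgroup.closure (insert (-1 : GL8) {udm, uc3, uA}) :=
      Subgroup.subset_closure (by simp)
    have m1 : udm ∈ Subgroup.closure (insert (-1 : GL8) {udm, uc3, uA}) :=
      Subgroup.subset_closure (by simp)
    have m2 : uc3 ∈ Subgroup.closure (insert (-1 : GL8) {udm, uc3, uA}) :=
      Subgroup.subset_closure (by simp)
    have m3 : uA ∈ Subgroup.closure (insert (-1 : GL8) {udm, uc3, uA}) :=
      Subgroup.subset_closure (by simp)
    intro y hy
    simp only [Set.mem_insert_iff, Set.mem_singleton_iff] at hy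
    simp only [SetLike.mem_coe]
    rcases hy with rfl | rfl | rfl | rfl
    · exact m0
    · rw [show ud = (-1 : GL8) * udm from by decide]; exact mul_mem m0 m1
    · exact m2
    · exact m3
  · rw [Subgroup.closure_le]
    have m0 : (-1 : GL8) ∈ Subgroup.closure (insert (-1 : GL8) {ud, uc3, uA}) :=
      Subgroup.subset_closure (by simp)
    have m1 : ud ∈ Subgroup.closure (insert (-1 : GL8) {ud, uc3, uA}) :=
      Subgroup.subset_closure (by simp)
    have m2 : uc3 ∈ Subgroup.closure (insert (-1 : GL8) {ud, uc3, uA}) :=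
      Subgroup.subset_closure (by simp)
    have m3 : uA ∈ Subgroup.closure (insert (-1 : GL8) {ud, uc3, uA}) :=
      Subgroup.subset_closure (by simp)
    intro y hy
    simp only [Set.mem_insert_iff, Set.mem_singleton_iff] at hy
    simp only [SetLike.mem_coe]
    rcases hy with rfl | rfl | rfl | rfl
    · exact m0
    · rw [show udm = (-1 : GL8) * ud from by decide]; exact mul_mem m0 m1
    · exact m2
    · exact m3

lemma eq15 : Subgroup.closure (insert (-1 : GL8) {ud, uc3, uA})
    = Subgroup.closure ({ud, uc5, uA} : Set GL8) := by
  apply le_antisymm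
  · rw [Subgroup.closure_le]
    have m1 : ud ∈ Subgroup.closure ({ud, uc5, uA} : Set GL8) :=
      Subgroup.subset_closure (by simp)
    have m2 : uc5 ∈ Subgroup.closure ({ud, uc5, uA} : Set GL8) :=
      Subgroup.subset_closure (by simp)
    have m3 : uA ∈ Subgroup.closure ({ud, uc5, uA} : Set GL8) :=
      Subgroup.subset_closure (by simp)
    intro y hy
    simp only [Set.mem_insert_iff, Set.mem_singleton_iff] at hy
    simp only [SetLike.mem_coe]
    rcases hy with rfl | rfl | rfl | rfl
    · rw [show (-1 : GL8) = ud * uc5 * uA * ud * uA from by decide]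
      exact mul_mem (mul_mem (mul_mem (mul_mem m1 m2) m3) m1) m3
    · exact m1
    · rw [show uc3 = ud * uc5 * uA * ud * uA * uc5 from by decide]
      exact mul_mem (mul_mem (mul_mem (mul_mem (mul_mem m1 m2) m3) m1) m3) m2
    · exact m3
  · rw [Subgroup.closure_le]
    have m0 : (-1 : GL8) ∈ Subgroup.closure (insert (-1 : GL8) {ud, uc3, uA}) :=
      Subgroup.subset_closure (by simp)
    have m1 : ud ∈ Subgroup.closure (insert (-1 : GL8) {ud, uc3, uA}) :=
      Subgroup.subset_closure (by simp)
    have m2 : uc3 ∈ Subgroup.closure (insert (-1 : GL8) {ud, uc3, uA}) :=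
      Subgroup.subset_closure (by simp)
    have m3 : uA ∈ Subgroup.closure (insert (-1 : GL8) {ud, uc3, uA}) :=
      Subgroup.subset_closure (by simp)
    intro y hy
    simp only [Set.mem_insert_iff, Set.mem_singleton_iff] at hy
    simp only [SetLike.mem_coe]
    rcases hy with rfl | rfl | rfl
    · exact m1
    · rw [show uc5 = (-1 : GL8) * uc3 from by decide]; exact mul_mem m0 m2
    · exact m3

lemma H13_le_K13 : H13 ≤ K13 := by
  rw [H13_eq, Subgroup.closure_le]
  intro x hx
  simp only [Set.mem_insert_iff, Set.mem_singleton_iff] at hx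
  simp only [SetLike.mem_coe]
  rcases hx with rfl | rfl | rfl
  · exact (mem_K13 _).mpr (by decide)
  · exact (mem_K13 _).mpr (by decide)
  · exact (mem_K13 _).mpr (by decide)

lemma Hm13_le_Km13 : Hm13 ≤ Km13 := by
  rw [Hm13_eq, Subgroup.closure_le]
  intro x hx
  simp only [Set.mem_insert_iff, Set.mem_singleton_iff] at hx
  simp only [SetLike.mem_coe]
  rcases hx with rfl | rfl | rfl
  · exact (mem_Km13 _).mpr (by decide)
  · exact (mem_Km13 _).mpr (by decide)
  · exact (mem_Km13 _).mpr (by decide)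

end Stmt13Aux

section
open Stmt13Aux

/-- In `GL(2, ℤ/8ℤ)`: (i) `H_{1,3}` is conjugate to `H′_{1,3}` and
`H_{−1,3}` is conjugate to `H′_{−1,3}`; (ii) neither `H_{1,3}` nor `H_{−1,3}` contains
`−Id`; (iii) `H_{1,3}` is not conjugate to `H_{−1,3}`; (iv) `⟨H_{1,3}, −Id⟩ =
⟨H_{−1,3}, −Id⟩ = H_{1,5}`. -/
theorem stmt_13 :
    (∃ g : GL (Fin 2) (ZMod 8), H13.map (MulAut.conj g).toMonoidHom = H13') ∧
    (∃ g : GL (Fin 2) (ZMod 8), Hm13.map (MulAut.conj g).toMonoidHom = Hm13') ∧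
    ((-1 : GL (Fin 2) (ZMod 8)) ∉ H13 ∧ (-1 : GL (Fin 2) (ZMod 8)) ∉ Hm13) ∧
    (¬ ∃ g : GL (Fin 2) (ZMod 8), H13.map (MulAut.conj g).toMonoidHom = Hm13) ∧
    (H13 ⊔ Subgroup.closure {(-1 : GL (Fin 2) (ZMod 8))} =
        Hm13 ⊔ Subgroup.closure {(-1 : GL (Fin 2) (ZMod 8))} ∧
      H13 ⊔ Subgroup.closure {(-1 : GL (Fin 2) (ZMod 8))} = H15) := by
  refine ⟨⟨ug, ?_⟩, ⟨ug, ?_⟩, ⟨?_, ?_⟩, ?_, ?_, ?_⟩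
  · rw [H13_eq, H13'_eq]
    exact conj_closure ud (by decide) (by decide)
  · rw [Hm13_eq, Hm13'_eq]
    exact conj_closure udm (by decide) (by decide)
  · intro hmem
    have h' := (mem_K13 _).mp (H13_le_K13 hmem)
    rw [show ent ((-1 : GL8) : M2) = ((7 : ZMod 8), (0 : ZMod 8), (0 : ZMod 8), (7 : ZMod 8))
      from by decide] at h'
    exact absurd h' (by decide)
  · intro hmem
    have h' := (mem_Km13 _).mp (Hm13_le_Km13 hmem)
    rw [show ent ((-1 : GL8) : M2) = ((7 : ZMod 8), (0 : ZMod 8), (0 : ZMod 8), (7 : ZMod 8))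
      from by decide] at h'
    exact absurd h' (by decide)
  · rintro ⟨g, hg⟩
    have hud : ud ∈ H13 := by rw [H13_eq]; exact Subgroup.subset_closure (by simp)
    have huA : uA ∈ H13 := by rw [H13_eq]; exact Subgroup.subset_closure (by simp)
    have h1 : g * ud * g⁻¹ ∈ Km13 := by
      have h := Subgroup.mem_map_of_mem (MulAut.conj g).toMonoidHom hud
      rw [hg] at h
      exact Hm13_le_Km13 (by simpa [MulAut.conj_apply] using h)
    have h2 : g * uA * g⁻¹ ∈ Km13 := by
      have h := Subgroup.mem_map_of_mem (MulAut.conj g).toMonoidHom huA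
      rw [hg] at h
      exact Hm13_le_Km13 (by simpa [MulAut.conj_apply] using h)
    have k1 := (mem_Km13 _).mp h1
    have k2 := (mem_Km13 _).mp h2
    have r1 : tmul (ent (g : M2)) (1,0,0,7)
        = tmul (ent ((g * ud * g⁻¹ : GL8) : M2)) (ent (g : M2)) := by
      have hgg : (g : M2) * ((ud : GL8) : M2) = ((g * ud * g⁻¹ : GL8) : M2) * (g : M2) := by
        rw [← Units.val_mul, ← Units.val_mul, inv_mul_cancel_right]
      have h := congrArg ent hgg
      rw [ent_mul, ent_mul] at h
      rwa [show ent ((ud : GL8) : M2) = ((1 : ZMod 8), (0 : ZMod 8), (0 : ZMod 8), (7 : ZMod 8))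
        from by decide] at h
    have r2 : tmul (ent (g : M2)) (1,1,6,1)
        = tmul (ent ((g * uA * g⁻¹ : GL8) : M2)) (ent (g : M2)) := by
      have hgg : (g : M2) * ((uA : GL8) : M2) = ((g * uA * g⁻¹ : GL8) : M2) * (g : M2) := by
        rw [← Units.val_mul, ← Units.val_mul, inv_mul_cancel_right]
      have h := congrArg ent hgg
      rw [ent_mul, ent_mul] at h
      rwa [show ent ((uA : GL8) : M2) = ((1 : ZMod 8), (1 : ZMod 8), (6 : ZMod 8), (1 : ZMod 8))
        from by decide] at h
    have hZ : tmul (ent (g : M2)) (ent ((g⁻¹ : GL8) : M2)) = (1,0,0,1) := by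
      rw [← ent_mul, Units.mul_inv]
      decide
    have hdt : dt (ent (g : M2)) * dt (ent ((g⁻¹ : GL8) : M2)) = 1 := by
      rw [← dt_tmul, hZ]; decide
    exact bigP _ (unit_mem _ _ hdt) ⟨_, k1, r1⟩ ⟨_, k2, r2⟩
  · rw [H13_eq, Hm13_eq, sup_eq, sup_eq]; exact eqm
  · rw [H13_eq, sup_eq, H15_eq]; exact eq15

end
end
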